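/- Let d ≥ 1 and τ be integers with 2τ > d, let G be a d-regular simple graph on a finite vertex set V (not necessarily triangle-free), and let {u,v} be an edge of G such that u and v have no common neighbour. Then the number of functions c : V → {a,b} for which the threshold algorithm outputs A_τ(c)(u) ≠ A_τ(c)(v), divided by 2^|V|, equals 1/2 + 4^{-(d-1)} · C(d-1, τ-1) · Σ_{i = d-τ+1}^{τ-1} C(d-1, i). -/

import Mathlib

/-- Binomial coefficient with integer lower index, following the convention
`C(n,k) = 0` for `k < 0` (and `k > n`). -/
def chooseZ (n : ℕ) (k : ℤ) : ℕ := if 0 ≤ k then n.choose k.toNat else 0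

open Finset


lemma count_eq {α : Type*} [Fintype α] [DecidableEq α] (s : Bool) (k : ℕ) :
    (univ.filter (fun f : α → Bool => (univ.filter (fun a => f a = s)).card = k)).card
      = (Fintype.card α).choose k := by
  rw [← Finset.card_univ, ← Finset.card_powersetCard k (univ : Finset α)]
  refine Finset.card_nbij' (fun f => univ.filter (fun a => f a = s))
    (fun S a => if a ∈ S then s else !s) ?_ ?_ ?_ ?_
  · intro f hf
    simp only [mem_coe, mem_filter, mem_univ, true_and] at hf
    simp [Finset.mem_powersetCard, hf]
  · intro S hS
    simp only [mem_coe, Finset.mem_powersetCard] at hS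
    simp only [mem_coe, mem_filter, mem_univ, true_and]
    rw [← hS.2]
    congr 1
    ext a
    simp only [mem_filter, mem_univ, true_and]
    by_cases h : a ∈ S <;> simp [h]
  · intro f hf
    funext a
    by_cases h : f a = s
    · simp [h]
    · simp only [mem_filter, mem_univ, true_and, h, if_false]
      cases s <;> revert h <;> cases f a <;> simp
  · intro S hS
    ext a
    simp only [mem_filter, mem_univ, true_and]
    by_cases h : a ∈ S <;> simp [h]

lemma count_lt {α : Type*} [Fintype α] [DecidableEq α] (s : Bool) (m : ℕ) :
    (univ.filter (fun f : α → Bool => (univ.filter (fun a => f a = s)).card < m)).card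
      = ∑ k ∈ range m, (Fintype.card α).choose k := by
  rw [Finset.card_eq_sum_card_fiberwise
    (f := fun f : α → Bool => (univ.filter (fun a => f a = s)).card) (t := range m)
    (by intro f hf; simp only [mem_coe, mem_filter, mem_univ, true_and] at hf; simpa using hf)]
  refine Finset.sum_congr rfl fun k hk => ?_
  rw [Finset.filter_filter, ← count_eq s k]
  congr 1
  apply Finset.filter_congr
  intro f _
  simp only [mem_range] at hk
  constructor
  · rintro ⟨_, h⟩; exact h
  · intro h; exact ⟨by omega, h⟩

lemma card_filter_subtype {V : Type*} [DecidableEq V] (A : Finset V) (p : V → Prop)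
    [DecidablePred p] :
    (univ.filter (fun a : {x // x ∈ A} => p a.val)).card = (A.filter p).card := by
  refine Finset.card_bij' (fun a _ => a.val) (fun x hx => ⟨x, (Finset.mem_filter.mp hx).1⟩)
    ?_ ?_ ?_ ?_
  · intro a ha
    simp only [mem_filter, mem_univ, true_and] at ha
    exact Finset.mem_filter.mpr ⟨a.2, ha⟩
  · intro x hx
    simp only [mem_filter, mem_univ, true_and]
    exact (Finset.mem_filter.mp hx).2
  · intro a _; rfl
  · intro x _; rfl

lemma card_filter_snd_sum {γ δ : Type*} [Fintype γ] [Fintype δ] (R : γ → δ → Prop)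
    [∀ c, DecidablePred (R c)] :
    (univ.filter (fun x : γ × δ => R x.1 x.2)).card = ∑ c : γ, (univ.filter (R c)).card := by
  classical
  rw [Finset.card_filter, Fintype.sum_prod_type]
  exact Finset.sum_congr rfl fun c _ => (Finset.card_filter _ _).symm

def splitEquiv {V : Type*} [DecidableEq V] (u v : V) (A B : Finset V)
    (huv : u ≠ v) (huA : u ∉ A) (hvA : v ∉ A) (huB : u ∉ B) (hvB : v ∉ B)
    (hAB : ∀ x, x ∈ A → x ∉ B) :
    (V → Bool) ≃ ((Bool × Bool) × (({x // x ∈ A} → Bool) × ({x // x ∈ B} → Bool)))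
      × ({x : V // x ≠ u ∧ x ≠ v ∧ x ∉ A ∧ x ∉ B} → Bool) where
  toFun c := (((c u, c v), (fun a => c a, fun b => c b)), fun r => c r)
  invFun x y :=
    if h1 : y = u then x.1.1.1 else
    if h2 : y = v then x.1.1.2 else
    if h3 : y ∈ A then x.1.2.1 ⟨y, h3⟩ else
    if h4 : y ∈ B then x.1.2.2 ⟨y, h4⟩ else
    x.2 ⟨y, h1, h2, h3, h4⟩
  left_inv c := by
    funext y
    dsimp only
    split_ifs with h1 h2 h3 h4 <;> first | (subst h1; rfl) | (subst h2; rfl) | rfl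
  right_inv x := by
    obtain ⟨⟨⟨s, t⟩, ⟨f, g⟩⟩, h⟩ := x
    refine Prod.ext (Prod.ext (Prod.ext ?_ ?_) (Prod.ext ?_ ?_)) ?_ <;> dsimp only
    · rw [dif_pos rfl]
    · rw [dif_neg (Ne.symm huv), dif_pos rfl]
    · funext a
      have h1 : (a : V) ≠ u := fun e => huA (e ▸ a.2)
      have h2 : (a : V) ≠ v := fun e => hvA (e ▸ a.2)
      rw [dif_neg h1, dif_neg h2, dif_pos a.2]
    · funext b
      have h1 : (b : V) ≠ u := fun e => huB (e ▸ b.2)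
      have h2 : (b : V) ≠ v := fun e => hvB (e ▸ b.2)
      have h3 : (b : V) ∉ A := fun e => hAB _ e b.2
      rw [dif_neg h1, dif_neg h2, dif_neg h3, dif_pos b.2]
    · funext r
      rw [dif_neg r.2.1, dif_neg r.2.2.1, dif_neg r.2.2.2.1, dif_neg r.2.2.2.2]

lemma card_and_or {α β : Type*} [Fintype α] [Fintype β] (p p' : α → Prop) (q q' : β → Prop)
    [DecidablePred p] [DecidablePred p'] [DecidablePred q] [DecidablePred q']
    (hpp' : ∀ a, ¬(p a ∧ p' a)) :
    (univ.filter (fun x : α × β => (p x.1 ∧ q x.2) ∨ (p' x.1 ∧ q' x.2))).card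
      = (univ.filter p).card * (univ.filter q).card
        + (univ.filter p').card * (univ.filter q').card := by
  classical
  rw [Finset.filter_or, Finset.card_union_of_disjoint]
  · rw [← Finset.univ_product_univ, Finset.filter_product, Finset.filter_product,
      Finset.card_product, Finset.card_product]
  · rw [Finset.disjoint_left]
    intro x hx hx'
    simp only [mem_filter] at hx hx'
    exact hpp' x.1 ⟨hx.2.1, hx'.2.1⟩

lemma card_filter_not {α : Type*} [Fintype α] (p : α → Prop) [DecidablePred p] :
    (univ.filter (fun a => ¬ p a)).card = Fintype.card α - (univ.filter p).card := by
  have := Finset.card_filter_add_card_filter_not (s := (univ : Finset α)) (p := p)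
  rw [Finset.card_univ] at this
  omega

lemma card_ite_ne_ite {α β : Type*} [Fintype α] [Fintype β] (p : α → Prop) (q : β → Prop)
    [DecidablePred p] [DecidablePred q] (b : Bool) :
    (univ.filter (fun x : α × β => (if p x.1 then b else !b) ≠ (if q x.2 then b else !b))).card
      = (univ.filter p).card * (Fintype.card β - (univ.filter q).card)
        + (Fintype.card α - (univ.filter p).card) * (univ.filter q).card := by
  rw [← card_filter_not q, ← card_filter_not p,
    ← card_and_or p (fun a => ¬ p a) (fun b => ¬ q b) q (by tauto)]
  congr 1
  apply Finset.filter_congr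
  intro x _
  by_cases h1 : p x.1 <;> by_cases h2 : q x.2 <;> simp [h1, h2]

lemma card_ite_ne_ite' {α β : Type*} [Fintype α] [Fintype β] (p : α → Prop) (q : β → Prop)
    [DecidablePred p] [DecidablePred q] (b : Bool) :
    (univ.filter (fun x : α × β => (if p x.1 then b else !b) ≠ (if q x.2 then !b else b))).card
      = (univ.filter p).card * (univ.filter q).card
        + (Fintype.card α - (univ.filter p).card) * (Fintype.card β - (univ.filter q).card) := by
  rw [← card_filter_not q, ← card_filter_not p,
    ← card_and_or p (fun a => ¬ p a) q (fun b => ¬ q b) (by tauto)]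
  congr 1
  apply Finset.filter_congr
  intro x _
  by_cases h1 : p x.1 <;> by_cases h2 : q x.2 <;> simp [h1, h2]

lemma card_filter_fst {γ δ : Type*} [Fintype γ] [Fintype δ] (Q : γ → Prop) [DecidablePred Q] :
    (univ.filter (fun x : γ × δ => Q x.1)).card = (univ.filter Q).card * Fintype.card δ := by
  rw [← Finset.univ_product_univ, Finset.filter_product_left, Finset.card_product,
    Finset.card_univ]

lemma card_filter_sum' {γ δ : Type*} [Fintype γ] [Fintype δ] (P : γ × δ → Prop)
    [DecidablePred P] :
    (univ.filter P).card = ∑ c : γ, (univ.filter (fun d => P (c, d))).card := by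
  classical
  rw [Finset.card_filter, Fintype.sum_prod_type]
  exact Finset.sum_congr rfl fun c _ => (Finset.card_filter _ _).symm

set_option maxHeartbeats 1000000 in
lemma card_P2' {α β : Type*} [Fintype α] [Fintype β] [DecidableEq α] [DecidableEq β] (τ : ℕ) :
    (univ.filter (fun y : (Bool × Bool) × ((α → Bool) × (β → Bool)) =>
        (if (univ.filter (fun a : α => y.2.1 a = y.1.1)).card
            + (if y.1.2 = y.1.1 then 1 else 0) < τ then y.1.1 else !y.1.1)
        ≠ (if (univ.filter (fun b : β => y.2.2 b = y.1.2)).card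
            + (if y.1.1 = y.1.2 then 1 else 0) < τ then y.1.2 else !y.1.2))).card
    = ((univ.filter (fun f : α → Bool => (univ.filter (fun a => f a = true)).card + 1 < τ)).card
          * (Fintype.card (β → Bool) - (univ.filter (fun g : β → Bool => (univ.filter (fun b => g b = true)).card + 1 < τ)).card)
        + (Fintype.card (α → Bool) - (univ.filter (fun f : α → Bool => (univ.filter (fun a => f a = true)).card + 1 < τ)).card)
          * (univ.filter (fun g : β → Bool => (univ.filter (fun b => g b = true)).card + 1 < τ)).card)
      + ((univ.filter (fun f : α → Bool => (univ.filter (fun a => f a = true)).card < τ)).card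
          * (univ.filter (fun g : β → Bool => (univ.filter (fun b => g b = false)).card < τ)).card
        + (Fintype.card (α → Bool) - (univ.filter (fun f : α → Bool => (univ.filter (fun a => f a = true)).card < τ)).card)
          * (Fintype.card (β → Bool) - (univ.filter (fun g : β → Bool => (univ.filter (fun b => g b = false)).card < τ)).card))
      + (((univ.filter (fun f : α → Bool => (univ.filter (fun a => f a = false)).card < τ)).card
          * (univ.filter (fun g : β → Bool => (univ.filter (fun b => g b = true)).card < τ)).card
        + (Fintype.card (α → Bool) - (univ.filter (fun f : α → Bool => (univ.filter (fun a => f a = false)).card < τ)).card)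
          * (Fintype.card (β → Bool) - (univ.filter (fun g : β → Bool => (univ.filter (fun b => g b = true)).card < τ)).card))
      + ((univ.filter (fun f : α → Bool => (univ.filter (fun a => f a = false)).card + 1 < τ)).card
          * (Fintype.card (β → Bool) - (univ.filter (fun g : β → Bool => (univ.filter (fun b => g b = false)).card + 1 < τ)).card)
        + (Fintype.card (α → Bool) - (univ.filter (fun f : α → Bool => (univ.filter (fun a => f a = false)).card + 1 < τ)).card)
          * (univ.filter (fun g : β → Bool => (univ.filter (fun b => g b = false)).card + 1 < τ)).card)) := by
  classical
  rw [card_filter_sum']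
  simp only [Fintype.sum_prod_type, Fintype.sum_bool]
  have e1 : #(filter
            (fun d : (α → Bool) × (β → Bool) =>
              (if (#(filter (fun a => d.1 a = true) univ) + if True then 1 else 0) < τ then true else !true) ≠
                if (#(filter (fun b => d.2 b = true) univ) + if True then 1 else 0) < τ then true else !true)
            univ)
      = #(filter (fun f : α → Bool => #(filter (fun a => f a = true) univ) + 1 < τ) univ)
          * (Fintype.card (β → Bool) - #(filter (fun g : β → Bool => #(filter (fun b => g b = true) univ) + 1 < τ) univ))
        + (Fintype.card (α → Bool) - #(filter (fun f : α → Bool => #(filter (fun a => f a = true) univ) + 1 < τ) univ))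
          * #(filter (fun g : β → Bool => #(filter (fun b => g b = true) univ) + 1 < τ) univ) := by
    refine (congrArg Finset.card (Finset.filter_congr (q := fun d : (α → Bool) × (β → Bool) =>
      (if #(filter (fun a => d.1 a = true) univ) + 1 < τ then true else !true)
        ≠ if #(filter (fun b => d.2 b = true) univ) + 1 < τ then true else !true)
      (fun d _ => by norm_num))).trans ?_
    exact card_ite_ne_ite (fun f : α → Bool => #(filter (fun a => f a = true) univ) + 1 < τ)
      (fun g : β → Bool => #(filter (fun b => g b = true) univ) + 1 < τ) true
  have e2 : #(filter
            (fun d : (α → Bool) × (β → Bool) =>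
              (if (#(filter (fun a => d.1 a = true) univ) + if false = true then 1 else 0) < τ then true else !true) ≠
                if (#(filter (fun b => d.2 b = false) univ) + if true = false then 1 else 0) < τ then false else !false)
            univ)
      = #(filter (fun f : α → Bool => #(filter (fun a => f a = true) univ) < τ) univ)
          * #(filter (fun g : β → Bool => #(filter (fun b => g b = false) univ) < τ) univ)
        + (Fintype.card (α → Bool) - #(filter (fun f : α → Bool => #(filter (fun a => f a = true) univ) < τ) univ))
          * (Fintype.card (β → Bool) - #(filter (fun g : β → Bool => #(filter (fun b => g b = false) univ) < τ) univ)) := by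
    refine (congrArg Finset.card (Finset.filter_congr (q := fun d : (α → Bool) × (β → Bool) =>
      (if #(filter (fun a => d.1 a = true) univ) < τ then true else !true)
        ≠ if #(filter (fun b => d.2 b = false) univ) < τ then !true else true)
      (fun d _ => by norm_num))).trans ?_
    exact card_ite_ne_ite' (fun f : α → Bool => #(filter (fun a => f a = true) univ) < τ)
      (fun g : β → Bool => #(filter (fun b => g b = false) univ) < τ) true
  have e3 : #(filter
            (fun d : (α → Bool) × (β → Bool) =>
              (if (#(filter (fun a => d.1 a = false) univ) + if true = false then 1 else 0) < τ then false
                else !false) ≠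
                if (#(filter (fun b => d.2 b = true) univ) + if false = true then 1 else 0) < τ then true else !true)
            univ)
      = #(filter (fun f : α → Bool => #(filter (fun a => f a = false) univ) < τ) univ)
          * #(filter (fun g : β → Bool => #(filter (fun b => g b = true) univ) < τ) univ)
        + (Fintype.card (α → Bool) - #(filter (fun f : α → Bool => #(filter (fun a => f a = false) univ) < τ) univ))
          * (Fintype.card (β → Bool) - #(filter (fun g : β → Bool => #(filter (fun b => g b = true) univ) < τ) univ)) := by
    refine (congrArg Finset.card (Finset.filter_congr (q := fun d : (α → Bool) × (β → Bool) =>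
      (if #(filter (fun a => d.1 a = false) univ) < τ then false else !false)
        ≠ if #(filter (fun b => d.2 b = true) univ) < τ then !false else false)
      (fun d _ => by norm_num))).trans ?_
    exact card_ite_ne_ite' (fun f : α → Bool => #(filter (fun a => f a = false) univ) < τ)
      (fun g : β → Bool => #(filter (fun b => g b = true) univ) < τ) false
  have e4 : #(filter
            (fun d : (α → Bool) × (β → Bool) =>
              (if (#(filter (fun a => d.1 a = false) univ) + if True then 1 else 0) < τ then false else !false) ≠
                if (#(filter (fun b => d.2 b = false) univ) + if True then 1 else 0) < τ then false else !false)
            univ)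
      = #(filter (fun f : α → Bool => #(filter (fun a => f a = false) univ) + 1 < τ) univ)
          * (Fintype.card (β → Bool) - #(filter (fun g : β → Bool => #(filter (fun b => g b = false) univ) + 1 < τ) univ))
        + (Fintype.card (α → Bool) - #(filter (fun f : α → Bool => #(filter (fun a => f a = false) univ) + 1 < τ) univ))
          * #(filter (fun g : β → Bool => #(filter (fun b => g b = false) univ) + 1 < τ) univ) := by
    refine (congrArg Finset.card (Finset.filter_congr (q := fun d : (α → Bool) × (β → Bool) =>
      (if #(filter (fun a => d.1 a = false) univ) + 1 < τ then false else !false)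
        ≠ if #(filter (fun b => d.2 b = false) univ) + 1 < τ then false else !false)
      (fun d _ => by norm_num))).trans ?_
    exact card_ite_ne_ite (fun f : α → Bool => #(filter (fun a => f a = false) univ) + 1 < τ)
      (fun g : β → Bool => #(filter (fun b => g b = false) univ) + 1 < τ) false
  rw [e1, e2, e3, e4]


lemma sum_choose_le (n m : ℕ) : ∑ k ∈ range m, n.choose k ≤ 2^n := by
  calc ∑ k ∈ range m, n.choose k ≤ ∑ k ∈ range (max m (n+1)), n.choose k :=
        Finset.sum_le_sum_of_subset (Finset.range_subset_range.2 (le_max_left _ _))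
    _ = ∑ k ∈ range (n+1), n.choose k := by
        rw [← Finset.sum_subset (Finset.range_subset_range.2 (le_max_right m (n+1)))]
        intro x _ hx
        simp only [mem_range] at hx
        exact Nat.choose_eq_zero_of_lt (by omega)
    _ = 2^n := Nat.sum_range_choose n

lemma key_identity (d τ : ℕ) (hd : 1 ≤ d) (hτ : d < 2*τ) :
    2 * ∑ k ∈ range τ, (d-1).choose k
      = 2^(d-1) + (∑ k ∈ Finset.Icc (d+1-τ) (τ-1), (d-1).choose k) + (d-1).choose (τ-1) := by
  have hτ1 : 1 ≤ τ := by omega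
  by_cases hcase : d + 1 ≤ τ
  · have hK : ∑ k ∈ range τ, (d-1).choose k = 2^(d-1) := by
      rw [← Nat.sum_range_choose (d-1), ← Finset.sum_subset (Finset.range_subset_range.2 (by omega : d-1+1 ≤ τ))]
      intro x _ hx
      simp only [mem_range] at hx
      exact Nat.choose_eq_zero_of_lt (by omega)
    have hS : Finset.Icc (d+1-τ) (τ-1) = range τ := by
      have : d + 1 - τ = 0 := by omega
      rw [this]
      ext k
      simp only [mem_Icc, mem_range]
      omega
    have hC : (d-1).choose (τ-1) = 0 := Nat.choose_eq_zero_of_lt (by omega)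
    rw [hK, hS, hK, hC]
    ring
  · -- τ ≤ d
    have hτd : τ ≤ d := by omega
    set n := d - 1 with hn
    have h2 : ∑ k ∈ Finset.Ico (d-τ) d, n.choose k = ∑ k ∈ range τ, n.choose k := by
      refine Finset.sum_nbij' (fun k => d - 1 - k) (fun k => d - 1 - k) ?_ ?_ ?_ ?_ ?_
      · intro a ha; simp only [mem_Ico] at ha; simp only [mem_range]; omega
      · intro a ha; simp only [mem_range] at ha; simp only [mem_Ico]; omega
      · intro a ha; simp only [mem_Ico] at ha; omega
      · intro a ha; simp only [mem_range] at ha; omega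
      · intro a ha
        simp only [mem_Ico] at ha
        have h1 : a ≤ n := by omega
        have : d - 1 - a = n - a := by omega
        rw [this, Nat.choose_symm h1]
    have hM : ∑ k ∈ range τ, n.choose k + ∑ k ∈ Finset.Ico τ d, n.choose k = 2^n := by
      rw [Finset.sum_range_add_sum_Ico _ hτd]
      have : d = n + 1 := by omega
      rw [this, Nat.sum_range_choose]
    have hsplit : ∑ k ∈ Finset.Ico (d-τ) d, n.choose k
        = n.choose (d-τ) + (∑ k ∈ Finset.Ico (d-τ+1) τ, n.choose k + ∑ k ∈ Finset.Ico τ d, n.choose k) := by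
      rw [Finset.sum_eq_sum_Ico_succ_bot (by omega : d - τ < d)]
      congr 1
      rw [Finset.sum_Ico_consecutive _ (by omega : d - τ + 1 ≤ τ) hτd]
    have hIccIco : Finset.Icc (d+1-τ) (τ-1) = Finset.Ico (d-τ+1) τ := by
      ext k; simp only [mem_Icc, mem_Ico]; omega
    have hCsym : n.choose (d-τ) = n.choose (τ-1) := by
      have h1 : d - τ ≤ n := by omega
      have h2 : n - (d - τ) = τ - 1 := by omega
      rw [← h2, Nat.choose_symm h1]
    rw [hIccIco]
    omega

lemma int_sum_eq (n d τ : ℕ) (hτ1 : 1 ≤ τ) :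
    ∑ i ∈ Finset.Icc ((d : ℤ) - τ + 1) ((τ : ℤ) - 1), (chooseZ n i : ℝ)
      = ∑ k ∈ Finset.Icc (d+1-τ) (τ-1), (n.choose k : ℝ) := by
  rw [← Finset.sum_subset (Finset.Icc_subset_Icc_left (by omega : (d:ℤ) - τ + 1 ≤ ((d+1-τ : ℕ) : ℤ)))]
  · refine Finset.sum_nbij' (fun i => i.toNat) (fun k => (k : ℤ)) ?_ ?_ ?_ ?_ ?_
    · intro a ha; simp only [mem_Icc] at ha ⊢; omega
    · intro a ha; simp only [mem_Icc] at ha ⊢; omega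
    · intro a ha; simp only [mem_Icc] at ha; omega
    · intro a ha; simp only [Int.toNat_natCast]
    · intro a ha
      simp only [mem_Icc] at ha
      have h0 : 0 ≤ a := by omega
      rw [chooseZ, if_pos h0]
  · intro i hi hni
    simp only [mem_Icc] at hi hni
    have : i < 0 := by omega
    rw [chooseZ, if_neg (by omega)]
    simp

lemma card_filter_equiv {α β : Type*} [Fintype α] [Fintype β] (e : α ≃ β)
    (p : β → Prop) [DecidablePred p] :
    (univ.filter (fun a => p (e a))).card = (univ.filter p).card := by
  refine Finset.card_nbij' e e.symm ?_ ?_ ?_ ?_ <;> intro x hx <;> simp_all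


set_option maxHeartbeats 2000000 in
theorem stmt16 {V : Type*} [Fintype V] [DecidableEq V]
    (d τ : ℕ) (hd : 1 ≤ d) (hτ : d < 2 * τ)
    (G : SimpleGraph V) [DecidableRel G.Adj]
    (hreg : G.IsRegularOfDegree d)
    (u v : V) (huv : G.Adj u v)
    (hcn : ∀ w : V, ¬(G.Adj u w ∧ G.Adj v w)) :
    ((Finset.univ.filter (fun c : V → Bool =>
        (if ((G.neighborFinset u).filter (fun y => c y = c u)).card < τ then c u else !(c u))
        ≠ (if ((G.neighborFinset v).filter (fun y => c y = c v)).card < τ then c v else !(c v)))).card : ℝ)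
      / 2 ^ (Fintype.card V)
    = 1/2 + (chooseZ (d-1) ((τ : ℤ) - 1) : ℝ) / 4 ^ (d-1)
        * ∑ i ∈ Finset.Icc ((d : ℤ) - τ + 1) ((τ : ℤ) - 1), (chooseZ (d-1) i : ℝ) := by
  classical
  have hτ1 : 1 ≤ τ := by omega
  have hKle : ∑ k ∈ range τ, (d-1).choose k ≤ 2^(d-1) := sum_choose_le _ _
  have hK'le : ∑ k ∈ range (τ-1), (d-1).choose k ≤ 2^(d-1) := sum_choose_le _ _
  have hkey := key_identity d τ hd hτ
  have hK'C : ∑ k ∈ range (τ-1), (d-1).choose k + (d-1).choose (τ-1)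
      = ∑ k ∈ range τ, (d-1).choose k := by
    rw [← Finset.sum_range_succ]
    have h1 : τ - 1 + 1 = τ := by omega
    rw [h1]
  have hcz : chooseZ (d-1) ((τ:ℤ) - 1) = (d-1).choose (τ-1) := by
    simp only [chooseZ, if_pos (by omega : (0:ℤ) ≤ (τ:ℤ)-1)]
    congr 1
    omega
  have huv' : u ≠ v := G.ne_of_adj huv
  set A : Finset V := (G.neighborFinset u).erase v with hA
  set B : Finset V := (G.neighborFinset v).erase u with hB
  have hvNu : v ∈ G.neighborFinset u := by rw [SimpleGraph.mem_neighborFinset]; exact huv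
  have huNv : u ∈ G.neighborFinset v := by rw [SimpleGraph.mem_neighborFinset]; exact huv.symm
  have hNu : G.neighborFinset u = insert v A := (Finset.insert_erase hvNu).symm
  have hNv : G.neighborFinset v = insert u B := (Finset.insert_erase huNv).symm
  have hAadj : ∀ x ∈ A, G.Adj u x := fun x hx => by
    have h := Finset.mem_of_mem_erase hx
    rwa [SimpleGraph.mem_neighborFinset] at h
  have hBadj : ∀ x ∈ B, G.Adj v x := fun x hx => by
    have h := Finset.mem_of_mem_erase hx
    rwa [SimpleGraph.mem_neighborFinset] at h
  have huA : u ∉ A := fun h => (G.loopless.irrefl u) (hAadj u h)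
  have hvA : v ∉ A := Finset.notMem_erase _ _
  have huB : u ∉ B := Finset.notMem_erase _ _
  have hvB : v ∉ B := fun h => (G.loopless.irrefl v) (hBadj v h)
  have hABd : ∀ x, x ∈ A → x ∉ B := fun x hx hxB => hcn x ⟨hAadj x hx, hBadj x hxB⟩
  have hdegu : (G.neighborFinset u).card = d := hreg u
  have hdegv : (G.neighborFinset v).card = d := hreg v
  have hAcard : Fintype.card {x // x ∈ A} = d - 1 := by
    rw [Fintype.card_coe, hA, Finset.card_erase_of_mem hvNu, hdegu]
  have hBcard : Fintype.card {x // x ∈ B} = d - 1 := by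
    rw [Fintype.card_coe, hB, Finset.card_erase_of_mem huNv, hdegv]
  have hu : ∀ c : V → Bool, ((G.neighborFinset u).filter (fun y => c y = c u)).card
      = (univ.filter (fun a : {x // x ∈ A} => c a.1 = c u)).card + (if c v = c u then 1 else 0) := by
    intro c
    rw [card_filter_subtype A (fun y => c y = c u), hNu, Finset.filter_insert]
    split_ifs with h
    · rw [Finset.card_insert_of_notMem (fun hm => hvA (Finset.mem_of_mem_filter v hm))]
    · rw [Nat.add_zero]
  have hv : ∀ c : V → Bool, ((G.neighborFinset v).filter (fun y => c y = c v)).card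
      = (univ.filter (fun b : {x // x ∈ B} => c b.1 = c v)).card + (if c u = c v then 1 else 0) := by
    intro c
    rw [card_filter_subtype B (fun y => c y = c v), hNv, Finset.filter_insert]
    split_ifs with h
    · rw [Finset.card_insert_of_notMem (fun hm => huB (Finset.mem_of_mem_filter u hm))]
    · rw [Nat.add_zero]
  have s12 : (Finset.univ.filter (fun c : V → Bool =>
      (if ((G.neighborFinset u).filter (fun y => c y = c u)).card < τ then c u else !(c u))
      ≠ (if ((G.neighborFinset v).filter (fun y => c y = c v)).card < τ then c v else !(c v)))).card
    = (univ.filter (fun x : ((Bool × Bool) × (({x // x ∈ A} → Bool) × ({x // x ∈ B} → Bool)))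
          × ({x : V // x ≠ u ∧ x ≠ v ∧ x ∉ A ∧ x ∉ B} → Bool) =>
        (if (univ.filter (fun a : {x // x ∈ A} => x.1.2.1 a = x.1.1.1)).card
            + (if x.1.1.2 = x.1.1.1 then 1 else 0) < τ then x.1.1.1 else !x.1.1.1)
        ≠ (if (univ.filter (fun b : {x // x ∈ B} => x.1.2.2 b = x.1.1.2)).card
            + (if x.1.1.1 = x.1.1.2 then 1 else 0) < τ then x.1.1.2 else !x.1.1.2))).card := by
    rw [← card_filter_equiv (splitEquiv u v A B huv' huA hvA huB hvB hABd) _]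
    congr 1
    apply Finset.filter_congr
    intro c _
    rw [hu c, hv c]
    exact Iff.rfl
  have s3 : (univ.filter (fun x : ((Bool × Bool) × (({x // x ∈ A} → Bool) × ({x // x ∈ B} → Bool)))
          × ({x : V // x ≠ u ∧ x ≠ v ∧ x ∉ A ∧ x ∉ B} → Bool) =>
        (if (univ.filter (fun a : {x // x ∈ A} => x.1.2.1 a = x.1.1.1)).card
            + (if x.1.1.2 = x.1.1.1 then 1 else 0) < τ then x.1.1.1 else !x.1.1.1)
        ≠ (if (univ.filter (fun b : {x // x ∈ B} => x.1.2.2 b = x.1.1.2)).card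
            + (if x.1.1.1 = x.1.1.2 then 1 else 0) < τ then x.1.1.2 else !x.1.1.2))).card
      = (univ.filter (fun y : (Bool × Bool) × (({x // x ∈ A} → Bool) × ({x // x ∈ B} → Bool)) =>
        (if (univ.filter (fun a : {x // x ∈ A} => y.2.1 a = y.1.1)).card
            + (if y.1.2 = y.1.1 then 1 else 0) < τ then y.1.1 else !y.1.1)
        ≠ (if (univ.filter (fun b : {x // x ∈ B} => y.2.2 b = y.1.2)).card
            + (if y.1.1 = y.1.2 then 1 else 0) < τ then y.1.2 else !y.1.2))).card
        * Fintype.card ({x : V // x ≠ u ∧ x ≠ v ∧ x ∉ A ∧ x ∉ B} → Bool) :=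
    card_filter_fst (fun y : (Bool × Bool) × (({x // x ∈ A} → Bool) × ({x // x ∈ B} → Bool)) =>
        (if (univ.filter (fun a : {x // x ∈ A} => y.2.1 a = y.1.1)).card
            + (if y.1.2 = y.1.1 then 1 else 0) < τ then y.1.1 else !y.1.1)
        ≠ (if (univ.filter (fun b : {x // x ∈ B} => y.2.2 b = y.1.2)).card
            + (if y.1.1 = y.1.2 then 1 else 0) < τ then y.1.2 else !y.1.2))
  have s4 : (univ.filter (fun y : (Bool × Bool) × (({x // x ∈ A} → Bool) × ({x // x ∈ B} → Bool)) =>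
        (if (univ.filter (fun a : {x // x ∈ A} => y.2.1 a = y.1.1)).card
            + (if y.1.2 = y.1.1 then 1 else 0) < τ then y.1.1 else !y.1.1)
        ≠ (if (univ.filter (fun b : {x // x ∈ B} => y.2.2 b = y.1.2)).card
            + (if y.1.1 = y.1.2 then 1 else 0) < τ then y.1.2 else !y.1.2))).card
      = ((univ.filter (fun f : {x // x ∈ A} → Bool => (univ.filter (fun a => f a = true)).card + 1 < τ)).card
          * (Fintype.card ({x // x ∈ B} → Bool) - (univ.filter (fun g : {x // x ∈ B} → Bool => (univ.filter (fun b => g b = true)).card + 1 < τ)).card)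
        + (Fintype.card ({x // x ∈ A} → Bool) - (univ.filter (fun f : {x // x ∈ A} → Bool => (univ.filter (fun a => f a = true)).card + 1 < τ)).card)
          * (univ.filter (fun g : {x // x ∈ B} → Bool => (univ.filter (fun b => g b = true)).card + 1 < τ)).card)
      + ((univ.filter (fun f : {x // x ∈ A} → Bool => (univ.filter (fun a => f a = true)).card < τ)).card
          * (univ.filter (fun g : {x // x ∈ B} → Bool => (univ.filter (fun b => g b = false)).card < τ)).card
        + (Fintype.card ({x // x ∈ A} → Bool) - (univ.filter (fun f : {x // x ∈ A} → Bool => (univ.filter (fun a => f a = true)).card < τ)).card)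
          * (Fintype.card ({x // x ∈ B} → Bool) - (univ.filter (fun g : {x // x ∈ B} → Bool => (univ.filter (fun b => g b = false)).card < τ)).card))
      + (((univ.filter (fun f : {x // x ∈ A} → Bool => (univ.filter (fun a => f a = false)).card < τ)).card
          * (univ.filter (fun g : {x // x ∈ B} → Bool => (univ.filter (fun b => g b = true)).card < τ)).card
        + (Fintype.card ({x // x ∈ A} → Bool) - (univ.filter (fun f : {x // x ∈ A} → Bool => (univ.filter (fun a => f a = false)).card < τ)).card)
          * (Fintype.card ({x // x ∈ B} → Bool) - (univ.filter (fun g : {x // x ∈ B} → Bool => (univ.filter (fun b => g b = true)).card < τ)).card))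
      + ((univ.filter (fun f : {x // x ∈ A} → Bool => (univ.filter (fun a => f a = false)).card + 1 < τ)).card
          * (Fintype.card ({x // x ∈ B} → Bool) - (univ.filter (fun g : {x // x ∈ B} → Bool => (univ.filter (fun b => g b = false)).card + 1 < τ)).card)
        + (Fintype.card ({x // x ∈ A} → Bool) - (univ.filter (fun f : {x // x ∈ A} → Bool => (univ.filter (fun a => f a = false)).card + 1 < τ)).card)
          * (univ.filter (fun g : {x // x ∈ B} → Bool => (univ.filter (fun b => g b = false)).card + 1 < τ)).card)) :=
    card_P2' τ
  have cntA1 : ∀ b : Bool, (univ.filter (fun f : {x // x ∈ A} → Bool =>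
      (univ.filter (fun a => f a = b)).card + 1 < τ)).card = ∑ k ∈ range (τ-1), (d-1).choose k := by
    intro b
    have h := count_lt (α := {x // x ∈ A}) b (τ-1)
    rw [hAcard] at h
    rw [← h]
    congr 1
    apply Finset.filter_congr
    intro f _
    exact Nat.lt_sub_iff_add_lt.symm
  have cntA0 : ∀ b : Bool, (univ.filter (fun f : {x // x ∈ A} → Bool =>
      (univ.filter (fun a => f a = b)).card < τ)).card = ∑ k ∈ range τ, (d-1).choose k := by
    intro b
    have h := count_lt (α := {x // x ∈ A}) b τ
    rwa [hAcard] at h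
  have cntB1 : ∀ b : Bool, (univ.filter (fun g : {x // x ∈ B} → Bool =>
      (univ.filter (fun bb => g bb = b)).card + 1 < τ)).card = ∑ k ∈ range (τ-1), (d-1).choose k := by
    intro b
    have h := count_lt (α := {x // x ∈ B}) b (τ-1)
    rw [hBcard] at h
    rw [← h]
    congr 1
    apply Finset.filter_congr
    intro f _
    exact Nat.lt_sub_iff_add_lt.symm
  have cntB0 : ∀ b : Bool, (univ.filter (fun g : {x // x ∈ B} → Bool =>
      (univ.filter (fun bb => g bb = b)).card < τ)).card = ∑ k ∈ range τ, (d-1).choose k := by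
    intro b
    have h := count_lt (α := {x // x ∈ B}) b τ
    rwa [hBcard] at h
  have hFA : Fintype.card ({x // x ∈ A} → Bool) = 2^(d-1) := by
    rw [Fintype.card_fun, Fintype.card_bool, hAcard]
  have hFB : Fintype.card ({x // x ∈ B} → Bool) = 2^(d-1) := by
    rw [Fintype.card_fun, Fintype.card_bool, hBcard]
  have hVpow : 2 ^ (Fintype.card V)
      = 2 * 2 * 2^(d-1) * 2^(d-1)
        * Fintype.card ({x : V // x ≠ u ∧ x ≠ v ∧ x ∉ A ∧ x ∉ B} → Bool) := by
    have h := Fintype.card_congr (splitEquiv u v A B huv' huA hvA huB hvB hABd)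
    simp only [Fintype.card_fun, Fintype.card_prod, Fintype.card_bool, hAcard, hBcard] at h
    rw [Fintype.card_fun, Fintype.card_bool, h]
    ring
  have hVpowR : (2:ℝ) ^ (Fintype.card V)
      = 2*2*2^(d-1)*2^(d-1)
        * (Fintype.card ({x : V // x ≠ u ∧ x ≠ v ∧ x ∉ A ∧ x ∉ B} → Bool) : ℝ) := by
    exact_mod_cast hVpow
  have hRCnz : (Fintype.card ({x : V // x ≠ u ∧ x ≠ v ∧ x ∉ A ∧ x ∉ B} → Bool) : ℝ) ≠ 0 :=
    Nat.cast_ne_zero.2 Fintype.card_ne_zero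
  rw [s12, s3, s4, cntA1 true, cntA1 false, cntA0 true, cntA0 false,
      cntB1 true, cntB1 false, cntB0 true, cntB0 false, hFA, hFB,
      int_sum_eq (d-1) d τ hτ1, hcz, hVpowR]
  push_cast [Nat.cast_sub hKle, Nat.cast_sub hK'le]
  have hkeyR : 2*(∑ k ∈ range τ, ((d-1).choose k:ℝ))
      = 2^(d-1) + (∑ k ∈ Finset.Icc (d+1-τ) (τ-1), ((d-1).choose k:ℝ))
        + ((d-1).choose (τ-1):ℝ) := by exact_mod_cast hkey
  have hK'CR : (∑ k ∈ range (τ-1), ((d-1).choose k:ℝ))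
      = (∑ k ∈ range τ, ((d-1).choose k:ℝ)) - ((d-1).choose (τ-1):ℝ) := by
    have h2 : (∑ k ∈ range (τ-1), ((d-1).choose k:ℝ)) + ((d-1).choose (τ-1):ℝ)
        = ∑ k ∈ range τ, ((d-1).choose k:ℝ) := by exact_mod_cast hK'C
    linarith
  have hSR : (∑ k ∈ Finset.Icc (d+1-τ) (τ-1), ((d-1).choose k:ℝ))
      = 2*(∑ k ∈ range τ, ((d-1).choose k:ℝ)) - 2^(d-1) - ((d-1).choose (τ-1):ℝ) := by
    linarith
  rw [hK'CR, hSR]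
  have h4 : (4:ℝ)^(d-1) = 2^(d-1) * 2^(d-1) := by
    rw [show (4:ℝ) = 2*2 by norm_num, mul_pow]
  rw [h4]
  have hx : (2:ℝ)^(d-1) ≠ 0 := pow_ne_zero _ two_ne_zero
  field_simp
  ring
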